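/- For any Morse order ≤ on a merge tree T, the induced function f_λ := λ ∘ φ on a path P with i(T) 1-simplices (where λ is the Morse labeling induced by ≤ and φ is the order isomorphism from simplices of P to nodes of T) is a discrete Morse function on P all of whose cells are critical. -/
import Mathlib


/-- Chirality: left or right. -/
inductive Chir : Type
  | L : Chir
  | R : Chir
  deriving DecidableEq

/-- The opposite chirality. -/
def Chir.other : Chir → Chir
  | .L => .R
  | .R => .L

/-- A merge tree: a full rooted chiral binary tree, encoded by the set of its nodes,
each node being the list of chiralities along the shortest path from the root to it
(the root is the empty list). -/
structure MergeTree : Type where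
  nodes : Finset (List Chir)
  root_mem : [] ∈ nodes
  prefix_closed : ∀ (w : List Chir) (x : Chir), w ++ [x] ∈ nodes → w ∈ nodes
  full : ∀ w : List Chir, w ++ [Chir.L] ∈ nodes ↔ w ++ [Chir.R] ∈ nodes

/-- An inner node: a node with (two) children. -/
def MergeTree.IsInner (T : MergeTree) (n : List Chir) : Prop :=
  n ∈ T.nodes ∧ n ++ [Chir.L] ∈ T.nodes

/-- A leaf node: a node without children. -/
def MergeTree.IsLeaf (T : MergeTree) (n : List Chir) : Prop :=
  n ∈ T.nodes ∧ n ++ [Chir.L] ∉ T.nodes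

/-- The chirality of a node (the root has chirality `L` by convention). -/
def chir (n : List Chir) : Chir := n.getLast?.getD Chir.L

/-- The number of inner nodes of a merge tree. -/
def MergeTree.innerCount (T : MergeTree) : ℕ :=
  (T.nodes.filter fun n => n ++ [Chir.L] ∈ T.nodes).card

/-- Auxiliary comparison of path words; the first argument is the letter at the last
position where the two words agreed (cf. "a_k = b_k"): under a common `L`, the letter
`L` precedes `R`; under a common `R`, `R` precedes `L`; shorter words are larger. -/
def leAux : Chir → List Chir → List Chir → Prop
  | _, _, [] => True
  | _, [], _ :: _ => False
  | last, x :: a, y :: b => if x = y then leAux x a b else x = last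

/-- The sublevel-connected Morse order (comparison of path words; every path word
starts with the letter `L` for the root). -/
def scLe (a b : List Chir) : Prop := leAux Chir.L a b

/-- The index Morse order: leaves below inner nodes; among leaves and among inner
nodes, compare path words. -/
def ioLe (T : MergeTree) (a b : List Chir) : Prop :=
  (T.IsLeaf a ∧ T.IsInner b) ∨
    (((T.IsLeaf a ∧ T.IsLeaf b) ∨ (T.IsInner a ∧ T.IsInner b)) ∧ scLe a b)

/-- The simplex order on the nodes of a merge tree. -/
def simpLe (a b : List Chir) : Prop :=
  a = b ∨ (b ++ [Chir.L]) <+: a ∨ (a ++ [Chir.R]) <+: b ∨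
    ∃ p : List Chir, (p ++ [Chir.L]) <+: a ∧ (p ++ [Chir.R]) <+: b

/-- A Morse order on a merge tree: a total order on the nodes that attains its maximum
at the root of each subtree and its minimum inside the child-subtree matching the
chirality of the root of the subtree. -/
def IsMorseOrder (T : MergeTree) (r : List Chir → List Chir → Prop) : Prop :=
  (∀ a ∈ T.nodes, r a a) ∧
  (∀ a ∈ T.nodes, ∀ b ∈ T.nodes, r a b → r b a → a = b) ∧
  (∀ a ∈ T.nodes, ∀ b ∈ T.nodes, ∀ c ∈ T.nodes, r a b → r b c → r a c) ∧
  (∀ a ∈ T.nodes, ∀ b ∈ T.nodes, r a b ∨ r b a) ∧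
  (∀ p ∈ T.nodes, ∀ n ∈ T.nodes, p <+: n → r n p) ∧
  (∀ p : List Chir, T.IsInner p → ∃ m ∈ T.nodes, (p ++ [chir p]) <+: m ∧
      ∀ n ∈ T.nodes, p <+: n → r m n)

/-- The Morse labeling induced by an order `r`: the unique order isomorphism from the
nodes of `T` onto `{0, 1, …, 2·i(T)}`. -/
def IsMorseLabeling (T : MergeTree) (r : List Chir → List Chir → Prop)
    (lab : List Chir → ℕ) : Prop :=
  (∀ n ∈ T.nodes, lab n < 2 * T.innerCount + 1) ∧
  (∀ k : ℕ, k < 2 * T.innerCount + 1 → ∃ n ∈ T.nodes, lab n = k) ∧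
  (∀ a ∈ T.nodes, ∀ b ∈ T.nodes, lab a = lab b → a = b) ∧
  (∀ a ∈ T.nodes, ∀ b ∈ T.nodes, (r a b ↔ lab a ≤ lab b))

/-- An order-preserving bijection from the simplices of a path with `i(T)` 1-simplices
(concretely: `Fin (2·i(T)+1)` with its linear order, which is the simplex order coming
from an orientation) to the nodes of `T` with the simplex order. -/
def IsSimplexIso (T : MergeTree) (φ : Fin (2 * T.innerCount + 1) → List Chir) : Prop :=
  (∀ i, φ i ∈ T.nodes) ∧
  (∀ n ∈ T.nodes, ∃ i, φ i = n) ∧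
  (∀ i j, i ≤ j ↔ simpLe (φ i) (φ j))

/-- A discrete Morse function, with only critical cells, on a path whose simplices are
listed left to right as `Fin N` (even indices are vertices, odd indices are edges):
injective and weakly increasing from a vertex to an incident edge. -/
def IsPathDMFallCrit {N : ℕ} {α : Type*} [LinearOrder α] (f : Fin N → α) : Prop :=
  Function.Injective f ∧
  ∀ j : ℕ, ∀ h : 2 * j + 2 < N,
    f ⟨2 * j, by omega⟩ ≤ f ⟨2 * j + 1, by omega⟩ ∧
    f ⟨2 * j + 2, by omega⟩ ≤ f ⟨2 * j + 1, by omega⟩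

lemma Stmt10.mem_of_prefix (T : MergeTree) (v : List Chir) :
    v ∈ T.nodes → ∀ u, u <+: v → u ∈ T.nodes := by
  induction v using List.reverseRecOn with
  | nil =>
    intro hv u hu
    rw [List.prefix_nil] at hu; subst hu; exact hv
  | append_singleton w x ih =>
    intro hv u hu
    rcases List.prefix_concat_iff.mp hu with h | h
    · subst h; exact hv
    · exact ih (T.prefix_closed w x hv) u h

lemma Stmt10.between (T : MergeTree) (φ : Fin (2 * T.innerCount + 1) → List Chir)
    (hφ : IsSimplexIso T φ) (i : ℕ) (hi : i + 1 < 2 * T.innerCount + 1)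
    (m : List Chir) (hm : m ∈ T.nodes)
    (h1 : simpLe (φ ⟨i, by omega⟩) m) (h2 : simpLe m (φ ⟨i + 1, hi⟩)) :
    m = φ ⟨i, by omega⟩ ∨ m = φ ⟨i + 1, hi⟩ := by
  obtain ⟨j, hj⟩ := hφ.2.1 m hm
  subst hj
  have a := (hφ.2.2 ⟨i, by omega⟩ j).mpr h1
  have b := (hφ.2.2 j ⟨i + 1, hi⟩).mpr h2
  rw [Fin.le_def] at a b
  simp only [Fin.val_mk] at a b
  have hj' : (j : ℕ) = i ∨ (j : ℕ) = i + 1 := by omega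
  rcases hj' with h | h
  · exact Or.inl (congrArg φ (Fin.ext h))
  · exact Or.inr (congrArg φ (Fin.ext h))

lemma Stmt10.succ_cases (T : MergeTree) (φ : Fin (2 * T.innerCount + 1) → List Chir)
    (hφ : IsSimplexIso T φ) (i : ℕ) (hi : i + 1 < 2 * T.innerCount + 1) :
    ((φ ⟨i + 1, hi⟩ ++ [Chir.L]) <+: φ ⟨i, by omega⟩ ∧
      T.IsLeaf (φ ⟨i, by omega⟩) ∧ T.IsInner (φ ⟨i + 1, hi⟩)) ∨
    ((φ ⟨i, by omega⟩ ++ [Chir.R]) <+: φ ⟨i + 1, hi⟩ ∧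
      T.IsInner (φ ⟨i, by omega⟩) ∧ T.IsLeaf (φ ⟨i + 1, hi⟩)) := by
  set a := φ ⟨i, by omega⟩ with ha_def
  set b := φ ⟨i + 1, hi⟩ with hb_def
  have ha : a ∈ T.nodes := hφ.1 _
  have hb : b ∈ T.nodes := hφ.1 _
  have hab : simpLe a b := (hφ.2.2 ⟨i, by omega⟩ ⟨i + 1, hi⟩).mp (Fin.mk_le_mk.mpr (by omega))
  have hne : a ≠ b := by
    intro h
    have h' : simpLe b a := Or.inl h.symm
    have := (hφ.2.2 ⟨i + 1, hi⟩ ⟨i, by omega⟩).mpr h'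
    rw [Fin.mk_le_mk] at this; omega
  rcases hab with h | h2 | h3 | ⟨p, hpa, hpb⟩
  · exact absurd h hne
  · -- b ++ [L] <+: a
    left
    have hinner : T.IsInner b := ⟨hb, Stmt10.mem_of_prefix T a ha _ h2⟩
    refine ⟨h2, ⟨ha, ?_⟩, hinner⟩
    intro haL
    have haR : a ++ [Chir.R] ∈ T.nodes := (T.full a).mp haL
    have hs1 : simpLe a (a ++ [Chir.R]) := Or.inr (Or.inr (Or.inl List.prefix_rfl))
    have hs2 : simpLe (a ++ [Chir.R]) b :=
      Or.inr (Or.inl (h2.trans (List.prefix_append a [Chir.R])))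
    rcases Stmt10.between T φ hφ i hi _ haR hs1 hs2 with h | h
    · rw [← ha_def] at h
      have := congrArg List.length h; simp at this
    · rw [← hb_def] at h
      have h2l : b.length + 1 ≤ a.length := by simpa using h2.length_le
      have := congrArg List.length h; simp at this; omega
  · -- a ++ [R] <+: b
    right
    have haR : a ++ [Chir.R] ∈ T.nodes := Stmt10.mem_of_prefix T b hb _ h3
    have hinner : T.IsInner a := ⟨ha, (T.full a).mpr haR⟩
    refine ⟨h3, hinner, hb, ?_⟩
    intro hbL
    have hs1 : simpLe a (b ++ [Chir.L]) :=
      Or.inr (Or.inr (Or.inl (h3.trans (List.prefix_append b [Chir.L]))))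
    have hs2 : simpLe (b ++ [Chir.L]) b := Or.inr (Or.inl List.prefix_rfl)
    rcases Stmt10.between T φ hφ i hi _ hbL hs1 hs2 with h | h
    · rw [← ha_def] at h
      have h3l : a.length + 1 ≤ b.length := by simpa using h3.length_le
      have := congrArg List.length h; simp at this; omega
    · rw [← hb_def] at h
      have := congrArg List.length h; simp at this
  · -- common branching: impossible for consecutive
    exfalso
    have hpaL : p ++ [Chir.L] ∈ T.nodes := Stmt10.mem_of_prefix T a ha _ hpa
    have hp : p ∈ T.nodes := T.prefix_closed p Chir.L hpaL
    have hs1 : simpLe a p := Or.inr (Or.inl hpa)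
    have hs2 : simpLe p b := Or.inr (Or.inr (Or.inl hpb))
    rcases Stmt10.between T φ hφ i hi _ hp hs1 hs2 with h | h
    · rw [← ha_def] at h; subst h
      have := hpa.length_le; simp at this
    · rw [← hb_def] at h; subst h
      have := hpb.length_le; simp at this

lemma Stmt10.zero_leaf (T : MergeTree) (φ : Fin (2 * T.innerCount + 1) → List Chir)
    (hφ : IsSimplexIso T φ) : T.IsLeaf (φ ⟨0, by omega⟩) := by
  refine ⟨hφ.1 _, ?_⟩
  intro hL
  obtain ⟨j, hj⟩ := hφ.2.1 _ hL
  have hs : simpLe (φ j) (φ ⟨0, by omega⟩) := by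
    rw [hj]; exact Or.inr (Or.inl List.prefix_rfl)
  have hle := (hφ.2.2 j ⟨0, by omega⟩).mpr hs
  have hv : (j : ℕ) ≤ 0 := hle
  have : j = ⟨0, by omega⟩ := by
    apply Fin.ext
    show (j : ℕ) = 0
    omega
  rw [this] at hj
  have := congrArg List.length hj; simp at this

lemma Stmt10.even_leaf (T : MergeTree) (φ : Fin (2 * T.innerCount + 1) → List Chir)
    (hφ : IsSimplexIso T φ) :
    ∀ j : ℕ, ∀ h : 2 * j < 2 * T.innerCount + 1, T.IsLeaf (φ ⟨2 * j, h⟩) := by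
  intro j
  induction j with
  | zero => intro h; exact Stmt10.zero_leaf T φ hφ
  | succ k ih =>
    intro h
    have h1 : 2 * k + 1 < 2 * T.innerCount + 1 := by omega
    have h0 : 2 * k < 2 * T.innerCount + 1 := by omega
    have leafk := ih h0
    have c1 := Stmt10.succ_cases T φ hφ (2 * k) h1
    have innerm : T.IsInner (φ ⟨2 * k + 1, h1⟩) := by
      rcases c1 with ⟨_, _, hin⟩ | ⟨_, hin, _⟩
      · exact hin
      · exact absurd hin.2 leafk.2
    have c2 := Stmt10.succ_cases T φ hφ (2 * k + 1) (by omega)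
    rcases c2 with ⟨_, hleaf, _⟩ | ⟨_, _, hleaf⟩
    · exact absurd innerm.2 hleaf.2
    · exact hleaf

/-- For any Morse order on a merge tree `T`, the induced function `f = lab ∘ φ` on a
path with `i(T)` 1-simplices is a discrete Morse function all of whose cells are
critical. -/
theorem stmt10 (T : MergeTree) (r : List Chir → List Chir → Prop)
    (hr : IsMorseOrder T r) (lab : List Chir → ℕ) (hlab : IsMorseLabeling T r lab)
    (φ : Fin (2 * T.innerCount + 1) → List Chir) (hφ : IsSimplexIso T φ) :
    IsPathDMFallCrit fun i => lab (φ i) := by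
  obtain ⟨hr1, hr2, hr3, hr4, hanc, hr6⟩ := hr
  obtain ⟨hlt, hsurjlab, labinj, hlabiff⟩ := hlab
  constructor
  · intro i j hij
    have hij' : φ i = φ j := labinj _ (hφ.1 i) _ (hφ.1 j) hij
    have h1 : i ≤ j := (hφ.2.2 i j).mpr (Or.inl hij')
    have h2 : j ≤ i := (hφ.2.2 j i).mpr (Or.inl hij'.symm)
    exact le_antisymm h1 h2
  · intro j h
    have leafE := Stmt10.even_leaf T φ hφ j (by omega)
    have leafE2 := Stmt10.even_leaf T φ hφ (j + 1) (by omega)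
    have c1 := Stmt10.succ_cases T φ hφ (2 * j) (by omega)
    have c2 := Stmt10.succ_cases T φ hφ (2 * j + 1) (by omega)
    have hpre1 : φ ⟨2 * j + 1, by omega⟩ <+: φ ⟨2 * j, by omega⟩ := by
      rcases c1 with ⟨hp, _, _⟩ | ⟨_, hin, _⟩
      · exact (List.prefix_append _ _).trans hp
      · exact absurd hin.2 leafE.2
    have hpre2 : φ ⟨2 * j + 1, by omega⟩ <+: φ ⟨2 * j + 2, by omega⟩ := by
      rcases c2 with ⟨_, _, hin⟩ | ⟨hp, _, _⟩
      · exact absurd hin.2 leafE2.2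
      · exact (List.prefix_append _ _).trans hp
    constructor
    · exact (hlabiff _ (hφ.1 _) _ (hφ.1 _)).mp
        (hanc _ (hφ.1 _) _ (hφ.1 _) hpre1)
    · exact (hlabiff _ (hφ.1 _) _ (hφ.1 _)).mp
        (hanc _ (hφ.1 _) _ (hφ.1 _) hpre2)
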